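/- Let τ > 0 and ε > 0, and define h : ℝ → ℝ by h(t) = (t − τ)/2 + √((t − τ)²/4 + ετ). Then for all x, y ∈ ℝ: y ≈^ε prox_{τ|·|}(x), i.e. (x − y)/τ ∈ ∂_ε |·|(y), if and only if y ∈ [ max(−h(−x), x − τ), min(h(x), x + τ) ]. -/

import Mathlib

set_option maxHeartbeats 1000000 in


/-- Inexact proximal points of the absolute value function on ℝ
(Example 2.3 of the paper). -/
theorem inexact_prox_of_abs (τ ε : ℝ) (hτ : 0 < τ) (hε : 0 < ε)
    (h : ℝ → ℝ)
    (hh : ∀ t : ℝ, h t = (t - τ) / 2 + Real.sqrt ((t - τ) ^ 2 / 4 + ε * τ)) :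
    ∀ x y : ℝ,
      (∀ w : ℝ, |w| ≥ |y| + (x - y) / τ * (w - y) - ε) ↔
        y ∈ Set.Icc (max (-h (-x)) (x - τ)) (min (h x) (x + τ)) := by
  intro x y
  rw [Set.mem_Icc, hh x, hh (-x)]
  set s1 := Real.sqrt ((x - τ) ^ 2 / 4 + ε * τ) with hs1def
  set s2 := Real.sqrt ((-x - τ) ^ 2 / 4 + ε * τ) with hs2def
  have hs1sq : s1 ^ 2 = (x - τ) ^ 2 / 4 + ε * τ := Real.sq_sqrt (by positivity)
  have hs2sq : s2 ^ 2 = (-x - τ) ^ 2 / 4 + ε * τ := Real.sq_sqrt (by positivity)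
  have hs1pos : 0 < s1 := Real.sqrt_pos.mpr (by positivity)
  have hs2pos : 0 < s2 := Real.sqrt_pos.mpr (by positivity)
  have hhxpos : 0 ≤ (x - τ) / 2 + s1 := by
    nlinarith [sq_nonneg ((x - τ) / 2 + s1)]
  have hhnxpos : 0 ≤ (-x - τ) / 2 + s2 := by
    nlinarith [sq_nonneg ((-x - τ) / 2 + s2)]
  constructor
  · intro H
    -- key quadratic inequality from w = 0
    have key0 := H 0
    simp only [abs_zero] at key0
    have keyq : τ * |y| - (x - y) * y ≤ ε * τ := by
      have heq : (x - y) / τ * (0 - y) = -((x - y) * y / τ) := by ring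
      rw [heq] at key0
      have := (le_div_iff₀ hτ).mp (by linarith : (|y| - ε) ≤ ((x - y) * y) / τ)
      nlinarith
    -- bound: y ≤ x + τ
    have h1 : y ≤ x + τ := by
      by_contra h'
      push_neg at h'
      set T : ℝ := ε * τ / (y - x - τ) + 1 with hT
      have hden : 0 < y - x - τ := by linarith
      have hTpos : 0 < T := by positivity
      have hH := H (y - T)
      have habs : |y - T| ≤ |y| + T := by
        calc |y - T| ≤ |y| + |T| := abs_sub _ _
        _ = |y| + T := by rw [abs_of_pos hTpos]
      have hlin : |y| + (x - y) / τ * ((y - T) - y) - ε ≤ |y| + T := le_trans hH habs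
      have heq : (x - y) / τ * ((y - T) - y) = (y - x) * T / τ := by ring
      rw [heq] at hlin
      have hd : (y - x) * T / τ ≤ T + ε := by linarith
      have h2 := (div_le_iff₀ hτ).mp hd
      have hTval : T * (y - x - τ) = ε * τ + (y - x - τ) := by
        rw [hT, add_mul, div_mul_cancel₀ _ hden.ne']; ring
      nlinarith
    -- bound: x - τ ≤ y
    have h2 : x - τ ≤ y := by
      by_contra h'
      push_neg at h'
      set T : ℝ := ε * τ / (x - τ - y) + 1 with hT
      have hden : 0 < x - τ - y := by linarith
      have hTpos : 0 < T := by positivity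
      have hH := H (y + T)
      have habs : |y + T| ≤ |y| + T := by
        calc |y + T| ≤ |y| + |T| := abs_add_le _ _
        _ = |y| + T := by rw [abs_of_pos hTpos]
      have hlin : |y| + (x - y) / τ * ((y + T) - y) - ε ≤ |y| + T := le_trans hH habs
      have heq : (x - y) / τ * ((y + T) - y) = (x - y) * T / τ := by ring
      rw [heq] at hlin
      have hd : (x - y) * T / τ ≤ T + ε := by linarith
      have h2 := (div_le_iff₀ hτ).mp hd
      have hTval : T * (x - τ - y) = ε * τ + (x - τ - y) := by
        rw [hT, add_mul, div_mul_cancel₀ _ hden.ne']; ring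
      nlinarith
    -- now the interval bounds
    constructor
    · apply max_le
      · rcases le_or_gt 0 y with hy | hy
        · linarith
        · rw [abs_of_neg hy] at keyq
          nlinarith [sq_nonneg (-y - (-x - τ) / 2 - s2), hs2pos]
      · exact h2
    · apply le_min
      · rcases le_or_gt 0 y with hy | hy
        · rw [abs_of_nonneg hy] at keyq
          nlinarith [sq_nonneg (y - (x - τ) / 2 - s1), hs1pos]
        · linarith
      · exact h1
  · rintro ⟨hlo, hhi⟩ w
    have hlo1 : -((-x - τ) / 2 + s2) ≤ y := le_trans (le_max_left _ _) hlo
    have hlo2 : x - τ ≤ y := le_trans (le_max_right _ _) hlo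
    have hhi1 : y ≤ (x - τ) / 2 + s1 := le_trans hhi (min_le_left _ _)
    have hhi2 : y ≤ x + τ := le_trans hhi (min_le_right _ _)
    -- the quadratic inequality
    have keyq : τ * |y| - (x - y) * y ≤ ε * τ := by
      rcases le_or_gt 0 y with hy | hy
      · rw [abs_of_nonneg hy]
        nlinarith [mul_nonneg hy (by linarith : (0:ℝ) ≤ (x - τ) / 2 + s1 - y)]
      · rw [abs_of_neg hy]
        nlinarith [mul_nonneg (by linarith : (0:ℝ) ≤ -y) (by linarith : (0:ℝ) ≤ (-x - τ) / 2 + s2 + y)]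
    -- |x - y| ≤ τ gives (x-y) * w ≤ τ * |w|
    have hA : (x - y) * w ≤ τ * |w| := by
      nlinarith [mul_nonneg (by linarith : (0:ℝ) ≤ τ - (x - y)) (by nlinarith [le_abs_self w, neg_abs_le w] : (0:ℝ) ≤ |w| + w),
        mul_nonneg (by linarith : (0:ℝ) ≤ τ + (x - y)) (by nlinarith [le_abs_self w, neg_abs_le w] : (0:ℝ) ≤ |w| - w)]
    -- conclude
    have hB : (x - y) * (w - y) ≤ (|w| - |y| + ε) * τ := by nlinarith
    have hC : (x - y) * (w - y) / τ ≤ |w| - |y| + ε := (div_le_iff₀ hτ).mpr hB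
    have heq : (x - y) / τ * (w - y) = (x - y) * (w - y) / τ := by ring
    rw [ge_iff_le, heq]
    linarith
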